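/- In any tree T with a good system of categories, every vertex v is contained in at least log₂(deg v) categories. -/

import Mathlib

open Finset SimpleGraph

variable {V : Type*}

def catDist [DecidableEq V] (S : Finset (Finset V)) (s t : V) : ℕ :=
  (S.filter fun C => t ∈ C ∧ s ∉ C).card

def IsGoodSystem [DecidableEq V] (G : SimpleGraph V) (S : Finset (Finset V)) : Prop :=
  (∀ C ∈ S, (G.induce (C : Set V)).Connected) ∧
    ∀ s t : V, s ≠ t → ∃ u, G.Adj s u ∧ catDist S u t < catDist S s t

def memdim [DecidableEq V] [Fintype V] (S : Finset (Finset V)) : ℕ :=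
  univ.sup fun v : V => (S.filter fun C => v ∈ C).card

noncomputable def graphDiam [Fintype V] (G : SimpleGraph V) : ℕ :=
  univ.sup fun p : V × V => G.dist p.1 p.2

noncomputable def minMemdim (V : Type*) [DecidableEq V] [Fintype V] (G : SimpleGraph V) : ℕ :=
  sInf {m | ∃ S : Finset (Finset V), IsGoodSystem G S ∧ memdim S = m}

lemma mem_of_forall_walk {G : SimpleGraph V} {C : Set V}
    (hC : (G.induce C).Connected) {x y z : V} (hx : x ∈ C) (hy : y ∈ C)
    (hsep : ∀ p : G.Walk x y, z ∈ p.support) : z ∈ C := by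
  obtain ⟨q⟩ := hC ⟨x, hx⟩ ⟨y, hy⟩
  have hz := hsep (q.map (SimpleGraph.Embedding.induce C).toHom)
  erw [SimpleGraph.Walk.support_map] at hz
  obtain ⟨a, _, ha⟩ := List.mem_map.mp hz
  exact ha ▸ a.2

lemma bridge_all {G : SimpleGraph V} (hT : G.IsAcyclic) {a b : V} (hab : G.Adj a b)
    (p : G.Walk a b) : s(a, b) ∈ p.edges := by
  have := (SimpleGraph.isAcyclic_iff_forall_edge_isBridge.mp hT)
    (show s(a, b) ∈ G.edgeSet from hab)
  exact ((SimpleGraph.isBridge_iff_adj_and_forall_walk_mem_edges.mp this)) p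

lemma sepB {G : SimpleGraph V} (hT : G.IsAcyclic) {v u u' : V} (hvu : G.Adj v u)
    (hvu' : G.Adj v u') (hne : u ≠ u') (p : G.Walk u' u) : v ∈ p.support := by
  have h := bridge_all hT hvu'.symm (p.concat hvu.symm)
  rw [SimpleGraph.Walk.edges_concat, List.concat_eq_append, List.mem_append,
    List.mem_singleton] at h
  rcases h with h | h
  · exact SimpleGraph.Walk.snd_mem_support_of_mem_edges p h
  · rw [Sym2.eq_iff] at h
    rcases h with ⟨h1, h2⟩ | ⟨h1, h2⟩
    · exact absurd h1.symm hne
    · exact absurd h2 hvu.ne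

lemma sepA {G : SimpleGraph V} (hT : G.IsAcyclic) {v u u' w : V} (hvu : G.Adj v u)
    (hvu' : G.Adj v u') (huw : G.Adj u w) (hne : u ≠ u') (hwv : w ≠ v)
    (p : G.Walk u' w) : u ∈ p.support := by
  have h := bridge_all hT hvu.symm (SimpleGraph.Walk.cons huw (p.reverse.concat hvu'.symm))
  rw [SimpleGraph.Walk.edges_cons, List.mem_cons, SimpleGraph.Walk.edges_concat,
    List.concat_eq_append, List.mem_append, List.mem_singleton,
    SimpleGraph.Walk.edges_reverse, List.mem_reverse] at h
  rcases h with h | h | h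
  · rw [Sym2.eq_iff] at h
    rcases h with ⟨h1, h2⟩ | ⟨h1, h2⟩
    · exact absurd h2.symm hwv
    · exact absurd h1 huw.ne
  · exact SimpleGraph.Walk.fst_mem_support_of_mem_edges p h
  · rw [Sym2.eq_iff] at h
    rcases h with ⟨h1, h2⟩ | ⟨h1, h2⟩
    · exact absurd h1 hne
    · exact absurd h1 hvu.ne'

theorem stmt8 [Fintype V] [DecidableEq V] (G : SimpleGraph V) [DecidableRel G.Adj]
    (hT : G.IsTree) (S : Finset (Finset V)) (hS : IsGoodSystem G S) (v : V) :
    Real.logb 2 (G.degree v) ≤ (S.filter fun C => v ∈ C).card := by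
  classical
  have hacyc : G.IsAcyclic := hT.IsAcyclic
  set k := (S.filter fun C => v ∈ C).card with hk
  have key : G.degree v ≤ 2 ^ k := by
    have hinj : Set.InjOn (fun u => S.filter fun C => v ∈ C ∧ u ∈ C)
        ↑(G.neighborFinset v) := by
      intro u hu u' hu' hfe
      by_contra hne
      rw [Finset.mem_coe, SimpleGraph.mem_neighborFinset] at hu hu'
      replace hfe : (S.filter fun C => v ∈ C ∧ u ∈ C) = S.filter fun C => v ∈ C ∧ u' ∈ C := hfe
      obtain ⟨w, huw, hlt⟩ := hS.2 u u' hne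
      simp only [catDist] at hlt
      by_cases hwv : w = v
      · rw [hwv] at hlt
        have hnsub : ¬ ((S.filter fun C => u' ∈ C ∧ u ∉ C) ⊆
            (S.filter fun C => u' ∈ C ∧ v ∉ C)) := fun hsub =>
          absurd (Finset.card_le_card hsub) (not_le.mpr hlt)
        obtain ⟨C, hCB, hCA⟩ := Finset.not_subset.mp hnsub
        rw [Finset.mem_filter] at hCB
        have hvC : v ∈ C := by
          by_contra hvC
          exact hCA (Finset.mem_filter.mpr ⟨hCB.1, hCB.2.1, hvC⟩)
        have hmem' : C ∈ S.filter fun D => v ∈ D ∧ u' ∈ D :=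
          Finset.mem_filter.mpr ⟨hCB.1, hvC, hCB.2.1⟩
        rw [← hfe] at hmem'
        exact hCB.2.2 (Finset.mem_filter.mp hmem').2.2
      · have hsub : (S.filter fun C => u' ∈ C ∧ u ∉ C) ⊆
            (S.filter fun C => u' ∈ C ∧ w ∉ C) := by
          intro C hC
          rw [Finset.mem_filter] at hC ⊢
          refine ⟨hC.1, hC.2.1, fun hwc => hC.2.2 ?_⟩
          exact mem_of_forall_walk (hS.1 C hC.1) hC.2.1 hwc
            (sepA hacyc hu hu' huw hne hwv)
        exact absurd (Finset.card_le_card hsub) (not_le.mpr hlt)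
    have hmaps : ∀ u ∈ G.neighborFinset v,
        (S.filter fun C => v ∈ C ∧ u ∈ C) ∈ (S.filter fun C => v ∈ C).powerset := by
      intro u _
      rw [Finset.mem_powerset]
      intro C hC
      rw [Finset.mem_filter] at hC ⊢
      exact ⟨hC.1, hC.2.1⟩
    have hle := Finset.card_le_card_of_injOn _ hmaps hinj
    rwa [Finset.card_powerset, SimpleGraph.card_neighborFinset_eq_degree] at hle
  rcases Nat.eq_zero_or_pos (G.degree v) with h0 | hpos
  · rw [h0]
    simp [Real.logb]
  · have h1 : (G.degree v : ℝ) ≤ (2 : ℝ) ^ k := by exact_mod_cast key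
    calc Real.logb 2 (G.degree v) ≤ Real.logb 2 ((2 : ℝ) ^ k) :=
          Real.logb_le_logb_of_le (by norm_num) (by exact_mod_cast hpos) h1
      _ = k := by
          rw [Real.logb_pow, Real.logb_self_eq_one (by norm_num)]
          ring
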